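/- Let $h : [n] \to [n]$ be a Hessenberg function (nondecreasing with $h(i) \ge i$ for all $i$), and for $1 \le i \le n$ let $a_i = |\{j < i : h(j) \ge i\}|$ (the number of cells strictly above the diagonal in row $i$ of the associated Dyck path region). For a positive integer $\alpha$, call a word $\sigma \in \{0,1,\dots,\alpha-1\}^n$ a proper coloring if $\sigma_i \ne \sigma_j$ whenever $i < j \le h(i)$. Then $\sum_{\sigma \text{ proper}} q^{\mathrm{inv}_h(\sigma) + \sigma_1 + \cdots + \sigma_n} = \prod_{i=1}^n (q^{\alpha} - q^{a_i})/(q-1)$, where $\mathrm{inv}_h(\sigma) = |\{(i,j) : i < j \le h(i),\ \sigma_i > \sigma_j\}|$. -/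

import Mathlib

open scoped Classical
open Finset

lemma XneOne : (RatFunc.X : RatFunc ℚ) ≠ 1 := by
  intro hX
  have h := congrArg RatFunc.num hX
  rw [RatFunc.num_X, RatFunc.num_one] at h
  simpa using congrArg Polynomial.natDegree h

lemma rank_orderIsoOfFin {β : Type*} [LinearOrder β] (s : Finset β) {m : ℕ} (hm : s.card = m)
    (k : Fin m) :
    (s.filter (fun x => x < (s.orderIsoOfFin hm k : β))).card = (k : ℕ) := by
  classical
  have himg : s.filter (fun x => x < (s.orderIsoOfFin hm k : β))
      = (Finset.univ.filter (fun j : Fin m => j < k)).image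
          (fun j => (s.orderIsoOfFin hm j : β)) := by
    ext x
    simp only [Finset.mem_filter, Finset.mem_image, Finset.mem_univ, true_and]
    constructor
    · rintro ⟨hxs, hxlt⟩
      obtain ⟨j, hj⟩ := (s.orderIsoOfFin hm).surjective ⟨x, hxs⟩
      refine ⟨j, ?_, by rw [hj]⟩
      have h2 : (s.orderIsoOfFin hm j : β) < (s.orderIsoOfFin hm k : β) := by
        rw [hj]; exact hxlt
      exact (s.orderIsoOfFin hm).lt_iff_lt.mp (Subtype.coe_lt_coe.mp h2)
    · rintro ⟨j, hjk, rfl⟩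
      exact ⟨(s.orderIsoOfFin hm j).2,
        Subtype.coe_lt_coe.mpr ((s.orderIsoOfFin hm).lt_iff_lt.mpr hjk)⟩
  rw [himg, Finset.card_image_of_injective _
      (fun a b hab => (s.orderIsoOfFin hm).injective (Subtype.ext hab))]
  have h3 : (Finset.univ.filter (fun j : Fin m => j < k)) = Finset.Iio k := by ext; simp
  rw [h3, Fin.card_Iio]

lemma card_filter_lt_fin {n : ℕ} (c : Fin n) :
    (Finset.univ.filter (fun x : Fin n => x < c)).card = (c : ℕ) := by
  have h3 : (Finset.univ.filter (fun x : Fin n => x < c)) = Finset.Iio c := by ext; simp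
  rw [h3, Fin.card_Iio]

lemma exp_rank {α : ℕ} (S : Finset (Fin α)) (c : Fin α) (hc : c ∉ S) :
    (c : ℕ) + (S.filter (fun s => c < s)).card
      = S.card + (Sᶜ.filter (fun x => x < c)).card := by
  have h2 : (S.filter (fun x => x < c)).card + (Sᶜ.filter (fun x => x < c)).card = (c : ℕ) := by
    rw [← card_filter_lt_fin c, ← Finset.card_union_of_disjoint
      (Finset.disjoint_filter_filter disjoint_compl_right), ← Finset.filter_union,
      Finset.union_compl]
  have h3 : (S.filter (fun x => x < c)).card + (S.filter (fun s => c < s)).card = S.card := by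
    rw [← Finset.card_union_of_disjoint, ← Finset.filter_or]
    · congr 1
      apply Finset.filter_true_of_mem
      intro x hx
      have : x ≠ c := fun hxc => hc (hxc ▸ hx)
      exact this.lt_or_gt
    · apply Finset.disjoint_filter_filter'
      rw [disjoint_iff_inf_le]
      intro x hx
      exact absurd (lt_trans hx.1 hx.2) (lt_irrefl x)
  omega

lemma colorSum {K : Type*} [Field K] {q : K} (hq : q ≠ 1) {α : ℕ} (S : Finset (Fin α)) :
    ∑ c ∈ Sᶜ, q ^ ((c : ℕ) + (S.filter (fun s => c < s)).card)
      = (q ^ α - q ^ S.card) / (q - 1) := by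
  have hSle : S.card ≤ α := by simpa using Finset.card_le_univ S
  have hcard : Sᶜ.card = α - S.card := by simp [Finset.card_compl]
  rw [Finset.sum_congr rfl (fun c hc => by
    rw [exp_rank S c (by simpa using hc)])]
  have e := Sᶜ.orderIsoOfFin hcard
  have hsum : ∑ c ∈ Sᶜ, q ^ (S.card + (Sᶜ.filter (fun x => x < c)).card)
      = ∑ k : Fin (α - S.card), q ^ (S.card + (k : ℕ)) := by
    rw [← Finset.sum_coe_sort Sᶜ (fun c => q ^ (S.card + (Sᶜ.filter (fun x => x < c)).card))]
    refine (Fintype.sum_equiv (Sᶜ.orderIsoOfFin hcard).toEquiv _ _ ?_).symm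
    intro k
    simp only [RelIso.coe_fn_toEquiv]
    rw [rank_orderIsoOfFin]
  rw [hsum, Fin.sum_univ_eq_sum_range (fun k => q ^ (S.card + k))]
  rw [← geom_sum_Ico hq hSle]
  rw [Finset.sum_Ico_eq_sum_range]
open scoped Classical
open Finset

lemma mainAux {K : Type*} [Field K] {q : K} (hq : q ≠ 1) (α : ℕ) :
    ∀ (n : ℕ) (h : Fin n → ℕ), Monotone h → (∀ i : Fin n, (i : ℕ) < h i ∧ h i ≤ n) →
    (∑ σ ∈ (Finset.univ : Finset (Fin n → Fin α)).filter
        (fun σ => ∀ i j : Fin n, i < j → (j : ℕ) < h i → σ i ≠ σ j),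
      q ^ ((Finset.univ.filter
            (fun p : Fin n × Fin n => p.1 < p.2 ∧ (p.2 : ℕ) < h p.1 ∧ σ p.2 < σ p.1)).card
          + ∑ i : Fin n, (σ i : ℕ))
    = ∏ i : Fin n,
        (q ^ α - q ^ ((Finset.univ.filter (fun j : Fin n => j < i ∧ (i : ℕ) < h j)).card))
          / (q - 1)) := by
  intro n
  induction n with
  | zero =>
      intro h _ _
      rw [Finset.filter_true_of_mem (fun σ _ => fun i => i.elim0)]
      simp
  | succ n IH =>
      intro h hmono hh
      set h' : Fin n → ℕ := fun j => min (h j.castSucc) n with hh'def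
      have hmono' : Monotone h' := fun a b hab =>
        min_le_min (hmono (Fin.castSucc_le_castSucc_iff.mpr hab)) le_rfl
      have hh'' : ∀ j : Fin n, (j : ℕ) < h' j ∧ h' j ≤ n := fun j =>
        ⟨lt_min (hh j.castSucc).1 j.isLt, min_le_right _ _⟩
      have hattack : ∀ (i j : Fin n), ((j : ℕ) < h' i ↔ (j : ℕ) < h i.castSucc) := fun i j =>
        ⟨fun hlt => lt_of_lt_of_le hlt (min_le_left _ _), fun hlt => lt_min hlt j.isLt⟩
      set A : Finset (Fin n) := Finset.univ.filter (fun j => (n : ℕ) < h j.castSucc) with hAdef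
      -- properness translation
      have hprop : ∀ (τ : Fin n → Fin α) (c : Fin α),
          ((∀ i j : Fin (n+1), i < j → (j : ℕ) < h i → (Fin.snoc τ c : Fin (n+1) → Fin α) i ≠ (Fin.snoc τ c : Fin (n+1) → Fin α) j)
            ↔ ((∀ i j : Fin n, i < j → (j : ℕ) < h' i → τ i ≠ τ j) ∧ ∀ j ∈ A, τ j ≠ c)) := by
        intro τ c
        constructor
        · intro H
          refine ⟨fun i j hij hja => ?_, fun j hjA => ?_⟩
          · have := H i.castSucc j.castSucc (by simpa using hij)
              (by simpa using (hattack i j).mp hja)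
            simpa using this
          · have := H j.castSucc (Fin.last n) (Fin.castSucc_lt_last j)
              (by simpa using (Finset.mem_filter.mp hjA).2)
            simpa using this
        · rintro ⟨H1, H2⟩ i j hij hja
          rcases eq_or_ne j (Fin.last n) with rfl | hjne
          · have hine : i ≠ Fin.last n := ne_of_lt hij
            obtain ⟨i', rfl⟩ := Fin.exists_castSucc_eq.mpr hine
            have hiA : i' ∈ A := Finset.mem_filter.mpr ⟨Finset.mem_univ _, by simpa using hja⟩
            simpa using H2 i' hiA
          · obtain ⟨j', rfl⟩ := Fin.exists_castSucc_eq.mpr hjne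
            have hine : i ≠ Fin.last n :=
              ne_of_lt (lt_of_lt_of_le hij (Fin.le_last _))
            obtain ⟨i', rfl⟩ := Fin.exists_castSucc_eq.mpr hine
            have hcond : (j' : ℕ) < h' i' := (hattack i' j').mpr (by simpa using hja)
            simpa using H1 i' j' (by simpa using hij) hcond
      -- inversion count translation
      have hinv : ∀ (τ : Fin n → Fin α) (c : Fin α),
          (Finset.univ.filter (fun p : Fin (n+1) × Fin (n+1) =>
              p.1 < p.2 ∧ (p.2 : ℕ) < h p.1 ∧ (Fin.snoc τ c : Fin (n+1) → Fin α) p.2 < (Fin.snoc τ c : Fin (n+1) → Fin α) p.1)).card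
          = (Finset.univ.filter (fun p : Fin n × Fin n =>
              p.1 < p.2 ∧ (p.2 : ℕ) < h' p.1 ∧ τ p.2 < τ p.1)).card
            + (A.filter (fun j => c < τ j)).card := by
        intro τ c
        rw [← Finset.card_filter_add_card_filter_not
          (p := fun p : Fin (n+1) × Fin (n+1) => p.2 ≠ Fin.last n)
          (s := Finset.univ.filter (fun p : Fin (n+1) × Fin (n+1) =>
              p.1 < p.2 ∧ (p.2 : ℕ) < h p.1 ∧ (Fin.snoc τ c : Fin (n+1) → Fin α) p.2 < (Fin.snoc τ c : Fin (n+1) → Fin α) p.1))]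
        congr 1
        · -- pairs not involving the last vertex
          rw [show (Finset.univ.filter (fun p : Fin (n+1) × Fin (n+1) =>
              p.1 < p.2 ∧ (p.2 : ℕ) < h p.1 ∧ (Fin.snoc τ c : Fin (n+1) → Fin α) p.2 < (Fin.snoc τ c : Fin (n+1) → Fin α) p.1)).filter
                (fun p => p.2 ≠ Fin.last n)
              = (Finset.univ.filter (fun p : Fin n × Fin n =>
                  p.1 < p.2 ∧ (p.2 : ℕ) < h' p.1 ∧ τ p.2 < τ p.1)).image
                  (fun p => (p.1.castSucc, p.2.castSucc)) from ?_]
          · exact Finset.card_image_of_injective _ (fun a b hab => by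
              have h1 := congrArg Prod.fst hab
              have h2 := congrArg Prod.snd hab
              simp only at h1 h2
              exact Prod.ext (Fin.castSucc_injective n h1) (Fin.castSucc_injective n h2))
          · ext ⟨p1, p2⟩
            simp only [Finset.mem_filter, Finset.mem_univ, true_and, Finset.mem_image]
            constructor
            · rintro ⟨⟨hlt, hcond, hσ⟩, hne⟩
              obtain ⟨j', rfl⟩ := Fin.exists_castSucc_eq.mpr hne
              have hine : p1 ≠ Fin.last n :=
                ne_of_lt (lt_of_lt_of_le hlt (Fin.le_last _))
              obtain ⟨i', rfl⟩ := Fin.exists_castSucc_eq.mpr hine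
              refine ⟨(i', j'), ⟨by simpa using hlt,
                (hattack i' j').mpr (by simpa using hcond), by simpa using hσ⟩, rfl⟩
            · rintro ⟨⟨i', j'⟩, ⟨hlt, hcond, hσ⟩, heq⟩
              simp only [Prod.mk.injEq] at heq
              obtain ⟨rfl, rfl⟩ := heq
              refine ⟨⟨by simpa using hlt, by simpa using (hattack i' j').mp hcond,
                by simpa using hσ⟩, ?_⟩
              exact ne_of_lt (Fin.castSucc_lt_last j')
        · -- pairs ending at the last vertex
          rw [show (Finset.univ.filter (fun p : Fin (n+1) × Fin (n+1) =>
              p.1 < p.2 ∧ (p.2 : ℕ) < h p.1 ∧ (Fin.snoc τ c : Fin (n+1) → Fin α) p.2 < (Fin.snoc τ c : Fin (n+1) → Fin α) p.1)).filter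
                (fun p => ¬ p.2 ≠ Fin.last n)
              = (A.filter (fun j => c < τ j)).image (fun j => (j.castSucc, Fin.last n)) from ?_]
          · exact Finset.card_image_of_injective _ (fun a b hab =>
              Fin.castSucc_injective n (congrArg Prod.fst hab))
          · ext ⟨p1, p2⟩
            simp only [Finset.mem_filter, Finset.mem_univ, true_and, Finset.mem_image, not_not]
            constructor
            · rintro ⟨⟨hlt, hcond, hσ⟩, rfl⟩
              have hine : p1 ≠ Fin.last n := ne_of_lt hlt
              obtain ⟨i', rfl⟩ := Fin.exists_castSucc_eq.mpr hine
              refine ⟨i', ⟨Finset.mem_filter.mpr ⟨Finset.mem_univ _, by simpa using hcond⟩,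
                by simpa using hσ⟩, rfl⟩
            · rintro ⟨j, ⟨hjA, hcj⟩, heq⟩
              simp only [Prod.mk.injEq] at heq
              obtain ⟨rfl, rfl⟩ := heq
              refine ⟨⟨Fin.castSucc_lt_last j, by simpa using (Finset.mem_filter.mp hjA).2,
                by simpa using hcj⟩, rfl⟩
      -- color sums
      have hsumc : ∀ (τ : Fin n → Fin α) (c : Fin α),
          ∑ i : Fin (n+1), (((Fin.snoc τ c : Fin (n+1) → Fin α) i : Fin α) : ℕ)
            = (∑ i : Fin n, (τ i : ℕ)) + (c : ℕ) := by
        intro τ c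
        rw [Fin.sum_univ_castSucc]
        simp
      -- ascent counts for the first n vertices
      have haCast : ∀ i : Fin n,
          (Finset.univ.filter
              (fun j : Fin (n+1) => j < i.castSucc ∧ ((i.castSucc : Fin (n+1)) : ℕ) < h j)).card
          = (Finset.univ.filter (fun j : Fin n => j < i ∧ (i : ℕ) < h' j)).card := by
        intro i
        rw [show (Finset.univ.filter
              (fun j : Fin (n+1) => j < i.castSucc ∧ ((i.castSucc : Fin (n+1)) : ℕ) < h j))
            = (Finset.univ.filter (fun j : Fin n => j < i ∧ (i : ℕ) < h' j)).image Fin.castSucc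
            from ?_]
        · exact Finset.card_image_of_injective _ (Fin.castSucc_injective n)
        · ext j
          simp only [Finset.mem_filter, Finset.mem_univ, true_and, Finset.mem_image]
          constructor
          · rintro ⟨hlt, hcond⟩
            have hjne : j ≠ Fin.last n :=
              ne_of_lt (lt_of_lt_of_le hlt (Fin.le_last _))
            obtain ⟨j', rfl⟩ := Fin.exists_castSucc_eq.mpr hjne
            exact ⟨j', ⟨by simpa using hlt, (hattack j' i).mpr (by simpa using hcond)⟩, rfl⟩
          · rintro ⟨j', ⟨h1, h2⟩, rfl⟩
            exact ⟨by simpa using h1, by simpa using (hattack j' i).mp h2⟩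
      -- ascent count for the last vertex
      have haLast :
          (Finset.univ.filter
              (fun j : Fin (n+1) => j < Fin.last n ∧ ((Fin.last n : Fin (n+1)) : ℕ) < h j)).card
          = A.card := by
        rw [show (Finset.univ.filter
              (fun j : Fin (n+1) => j < Fin.last n ∧ ((Fin.last n : Fin (n+1)) : ℕ) < h j))
            = A.image Fin.castSucc from ?_]
        · exact Finset.card_image_of_injective _ (Fin.castSucc_injective n)
        · ext j
          simp only [Finset.mem_filter, Finset.mem_univ, true_and, Finset.mem_image, hAdef]
          constructor
          · rintro ⟨hlt, hcond⟩
            obtain ⟨j', rfl⟩ := Fin.exists_castSucc_eq.mpr (ne_of_lt hlt)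
            exact ⟨j', by simpa using hcond, rfl⟩
          · rintro ⟨j', hcond, rfl⟩
            exact ⟨Fin.castSucc_lt_last j', by simpa using hcond⟩
      -- now compute
      rw [Fin.prod_univ_castSucc]
      rw [Finset.sum_filter]
      rw [← Equiv.sum_comp (Fin.snocEquiv (fun _ => Fin α))]
      simp only [Fin.snocEquiv_apply]
      rw [Fintype.sum_prod_type]
      rw [Finset.sum_comm]
      have key : ∀ τ : Fin n → Fin α,
          (∑ c : Fin α,
            if (∀ i j : Fin (n+1), i < j → (j : ℕ) < h i → (Fin.snoc τ c : Fin (n+1) → Fin α) i ≠ (Fin.snoc τ c : Fin (n+1) → Fin α) j)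
            then q ^ ((Finset.univ.filter (fun p : Fin (n+1) × Fin (n+1) =>
                  p.1 < p.2 ∧ (p.2 : ℕ) < h p.1 ∧ (Fin.snoc τ c : Fin (n+1) → Fin α) p.2 < (Fin.snoc τ c : Fin (n+1) → Fin α) p.1)).card
                + ∑ i : Fin (n+1), (((Fin.snoc τ c : Fin (n+1) → Fin α) i : Fin α) : ℕ)) else 0)
          = (if (∀ i j : Fin n, i < j → (j : ℕ) < h' i → τ i ≠ τ j)
              then q ^ ((Finset.univ.filter (fun p : Fin n × Fin n =>
                  p.1 < p.2 ∧ (p.2 : ℕ) < h' p.1 ∧ τ p.2 < τ p.1)).card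
                + ∑ i : Fin n, (τ i : ℕ)) else 0)
            * ((q ^ α - q ^ A.card) / (q - 1)) := by
        intro τ
        simp only [hprop, hinv, hsumc]
        by_cases hP : ∀ i j : Fin n, i < j → (j : ℕ) < h' i → τ i ≠ τ j
        · simp only [eq_true hP, true_and, if_true]
          have hinj : Set.InjOn τ A := by
            intro a ha b hb hab
            by_contra hne
            have hclique : ∀ x : Fin n, x ∈ A → ∀ y : Fin n, (y : ℕ) < h' x := by
              intro x hx y
              have hxA : (n : ℕ) < h x.castSucc := by
                simpa [hAdef] using hx
              exact lt_min (lt_trans y.isLt hxA) y.isLt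
            rcases Ne.lt_or_gt hne with hlt | hlt
            · exact hP a b hlt (hclique a ha b) hab
            · exact hP b a hlt (hclique b hb a) hab.symm
          have hScard : (A.image τ).card = A.card := Finset.card_image_of_injOn hinj
          have hfilt : ∀ c : Fin α,
              (A.filter (fun j => c < τ j)).card
                = ((A.image τ).filter (fun s => c < s)).card := by
            intro c
            rw [Finset.filter_image]
            exact (Finset.card_image_of_injOn
              (hinj.mono (by exact_mod_cast Finset.filter_subset _ _))).symm
          have hcond : ∀ c : Fin α, (∀ j ∈ A, τ j ≠ c) ↔ c ∈ (A.image τ)ᶜ := by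
            intro c
            simp only [Finset.mem_compl, Finset.mem_image]
            push_neg
            tauto
          calc (∑ c : Fin α,
              if (∀ j ∈ A, τ j ≠ c)
              then q ^ ((Finset.univ.filter (fun p : Fin n × Fin n =>
                  p.1 < p.2 ∧ (p.2 : ℕ) < h' p.1 ∧ τ p.2 < τ p.1)).card
                + (A.filter (fun j => c < τ j)).card
                + ((∑ i : Fin n, (τ i : ℕ)) + (c : ℕ))) else 0)
              = ∑ c ∈ (A.image τ)ᶜ,
                  q ^ (((Finset.univ.filter (fun p : Fin n × Fin n =>
                    p.1 < p.2 ∧ (p.2 : ℕ) < h' p.1 ∧ τ p.2 < τ p.1)).card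
                    + ∑ i : Fin n, (τ i : ℕ))
                    + ((c : ℕ) + ((A.image τ).filter (fun s => c < s)).card)) := by
                rw [← Finset.sum_filter]
                rw [show Finset.univ.filter (fun c : Fin α => ∀ j ∈ A, τ j ≠ c) = (A.image τ)ᶜ by
                  ext c; simp only [Finset.mem_filter, Finset.mem_univ, true_and]; rw [hcond]]
                apply Finset.sum_congr rfl
                intro c _
                rw [hfilt c]
                congr 1
                omega
            _ = q ^ ((Finset.univ.filter (fun p : Fin n × Fin n =>
                    p.1 < p.2 ∧ (p.2 : ℕ) < h' p.1 ∧ τ p.2 < τ p.1)).card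
                    + ∑ i : Fin n, (τ i : ℕ))
                * ((q ^ α - q ^ A.card) / (q - 1)) := by
                rw [← hScard, ← colorSum hq (A.image τ)]
                rw [Finset.mul_sum]
                apply Finset.sum_congr rfl
                intro c _
                rw [pow_add]
        · simp [hP]
      calc (∑ τ : Fin n → Fin α, ∑ c : Fin α,
            if (∀ i j : Fin (n+1), i < j → (j : ℕ) < h i → (Fin.snoc τ c : Fin (n+1) → Fin α) i ≠ (Fin.snoc τ c : Fin (n+1) → Fin α) j)
            then q ^ ((Finset.univ.filter (fun p : Fin (n+1) × Fin (n+1) =>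
                  p.1 < p.2 ∧ (p.2 : ℕ) < h p.1 ∧ (Fin.snoc τ c : Fin (n+1) → Fin α) p.2 < (Fin.snoc τ c : Fin (n+1) → Fin α) p.1)).card
                + ∑ i : Fin (n+1), (((Fin.snoc τ c : Fin (n+1) → Fin α) i : Fin α) : ℕ)) else 0)
          = ∑ τ : Fin n → Fin α,
              (if (∀ i j : Fin n, i < j → (j : ℕ) < h' i → τ i ≠ τ j)
                then q ^ ((Finset.univ.filter (fun p : Fin n × Fin n =>
                    p.1 < p.2 ∧ (p.2 : ℕ) < h' p.1 ∧ τ p.2 < τ p.1)).card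
                  + ∑ i : Fin n, (τ i : ℕ)) else 0)
                * ((q ^ α - q ^ A.card) / (q - 1)) :=
            Finset.sum_congr rfl (fun τ _ => key τ)
        _ = (∑ τ ∈ (Finset.univ : Finset (Fin n → Fin α)).filter
                (fun τ => ∀ i j : Fin n, i < j → (j : ℕ) < h' i → τ i ≠ τ j),
              q ^ ((Finset.univ.filter (fun p : Fin n × Fin n =>
                  p.1 < p.2 ∧ (p.2 : ℕ) < h' p.1 ∧ τ p.2 < τ p.1)).card
                + ∑ i : Fin n, (τ i : ℕ)))
            * ((q ^ α - q ^ A.card) / (q - 1)) := by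
            rw [Finset.sum_mul, Finset.sum_filter]
            simp only [ite_mul, zero_mul]
        _ = (∏ i : Fin n,
              (q ^ α - q ^ ((Finset.univ.filter
                  (fun j : Fin n => j < i ∧ (i : ℕ) < h' j)).card)) / (q - 1))
            * ((q ^ α - q ^ A.card) / (q - 1)) := by
            rw [IH h' hmono' hh'']
        _ = _ := by
            congr 1
            · apply Finset.prod_congr rfl
              intro i _
              rw [haCast i]
            · rw [haLast]


/-- Principal specialization of the Shareshian–Wachs chromatic quasisymmetric function
of a Hessenberg function factors as a product.  Here indices are `0`-based: vertex
`i : Fin n` corresponds to `i+1`, `h i` is the (1-based) value of the Hessenberg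
function, `i < j` attack iff `(j : ℕ) < h i`, and
`a i = #{j < i : h j ≥ i + 1}`. -/
theorem chromatic_principal_specialization (n : ℕ) (hn : 1 ≤ n) (h : Fin n → ℕ)
    (hmono : Monotone h) (hh : ∀ i : Fin n, (i : ℕ) < h i ∧ h i ≤ n)
    (α : ℕ) (hα : 0 < α) :
    ∑ σ ∈ (Finset.univ : Finset (Fin n → Fin α)).filter
        (fun σ => ∀ i j : Fin n, i < j → (j : ℕ) < h i → σ i ≠ σ j),
      (RatFunc.X : RatFunc ℚ) ^
        ((Finset.univ.filter
            (fun p : Fin n × Fin n => p.1 < p.2 ∧ (p.2 : ℕ) < h p.1 ∧ σ p.2 < σ p.1)).card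
          + ∑ i : Fin n, (σ i : ℕ))
    = ∏ i : Fin n,
        ((RatFunc.X : RatFunc ℚ) ^ α -
            RatFunc.X ^
              ((Finset.univ.filter (fun j : Fin n => j < i ∧ (i : ℕ) < h j)).card)) /
          (RatFunc.X - 1) := by
  exact mainAux XneOne α n h hmono hh
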